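/- Let μ ≥ 0 and η > η̄. Then L_{η,μ}((β,γ),(β̃,γ̃)) is level bounded in (β,γ) locally uniformly in (β̃,γ̃): for every (β̄,γ̄) ∈ ℝ^p × ℝ^q and every ρ ∈ ℝ there exist ε > 0 and a bounded set B ⊆ ℝ^p × ℝ^q such that {(β,γ) : L_{η,μ}((β,γ),(β̃,γ̃)) ≤ ρ} ⊆ B for every (β̃,γ̃) with ‖(β̃,γ̃) − (β̄,γ̄)‖ ≤ ε. -/

import Mathlib

open Matrix Real Filter Topology Bornology
open scoped Pointwise

noncomputable section

abbrev Vec (k : ℕ) : Type := Fin k → ℝ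

/-- Euclidean norm of a vector. -/
def eNorm {ι : Type*} [Fintype ι] (x : ι → ℝ) : ℝ := Real.sqrt (∑ j, (x j) ^ 2)

/-- Squared Euclidean norm of a pair of vectors. -/
def sqnorm2 {p q : ℕ} (w : Vec p × Vec q) : ℝ :=
  (∑ j, (w.1 j) ^ 2) + ∑ j, (w.2 j) ^ 2

/-- ℓ²→ℓ² operator norm of a matrix (its largest singular value). -/
def opNorm {ι κ : Type*} [Fintype ι] [Fintype κ] (M : Matrix ι κ ℝ) : ℝ :=
  sInf {c : ℝ | 0 ≤ c ∧ ∀ x : κ → ℝ, eNorm (M.mulVec x) ≤ c * eNorm x}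

/-- Smallest eigenvalue of a symmetric matrix, via Rayleigh quotients. -/
def minEig {ι : Type*} [Fintype ι] (M : Matrix ι ι ℝ) : ℝ :=
  sInf {r : ℝ | ∃ x : ι → ℝ, eNorm x = 1 ∧ r = x ⬝ᵥ M.mulVec x}

/-- Largest eigenvalue of a symmetric matrix, via Rayleigh quotients. -/
def maxEig {ι : Type*} [Fintype ι] (M : Matrix ι ι ℝ) : ℝ :=
  sSup {r : ℝ | ∃ x : ι → ℝ, eNorm x = 1 ∧ r = x ⬝ᵥ M.mulVec x}

/-- The log-barrier (perspective of the negative log). -/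
def phiBar (μ : ℝ) {q : ℕ} (γ : Vec q) : EReal :=
  if μ = 0 then (if ∀ j, 0 ≤ γ j then (0 : EReal) else ⊤)
  else if 0 < μ then
    (if ∀ j, 0 < γ j then (((-μ) * ∑ j, Real.log (γ j / μ) : ℝ) : EReal) else ⊤)
  else ⊤

/-- The coupling function κ_η. -/
def kappaFun (η : ℝ) {p q : ℕ} (w : Vec p × Vec q) : ℝ := η / 2 * sqnorm2 w

/-- 1-coercivity: liminf of F(w)/‖w‖ as ‖w‖ → ∞ is positive. -/
def OneCoercive {p q : ℕ} (R : Vec p × Vec q → EReal) : Prop :=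
  ∃ c : ℝ, 0 < c ∧ ∃ r : ℝ, ∀ w : Vec p × Vec q,
    r ≤ Real.sqrt (sqnorm2 w) → ((c * Real.sqrt (sqnorm2 w) : ℝ) : EReal) ≤ R w

/-- Data of a linear mixed-effects model. -/
structure LMEData (m p q : ℕ) where
  n : Fin m → ℕ
  X : ∀ i, Matrix (Fin (n i)) (Fin p) ℝ
  Z : ∀ i, Matrix (Fin (n i)) (Fin q) ℝ
  y : ∀ i, Fin (n i) → ℝ
  lam : ∀ i, Matrix (Fin (n i)) (Fin (n i)) ℝ

namespace LMEData

variable {m p q : ℕ}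

/-- Ω_i(Γ) = Z_i Γ Z_iᵀ + Λ_i. -/
def Omega (D : LMEData m p q) (Γ : Matrix (Fin q) (Fin q) ℝ) (i : Fin m) :
    Matrix (Fin (D.n i)) (Fin (D.n i)) ℝ :=
  D.Z i * Γ * (D.Z i)ᵀ + D.lam i

/-- The marginal negative log-likelihood L_ML(β, Γ). -/
def LML (D : LMEData m p q) (β : Vec p) (Γ : Matrix (Fin q) (Fin q) ℝ) : ℝ :=
  ∑ i, ((1 : ℝ) / 2 * ((D.y i - D.X i *ᵥ β) ⬝ᵥ ((D.Omega Γ i)⁻¹ *ᵥ (D.y i - D.X i *ᵥ β)))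
    + (1 : ℝ) / 2 * Real.log (D.Omega Γ i).det)

/-- L(β, γ) = L_ML(β, Diag γ). -/
def L (D : LMEData m p q) (β : Vec p) (γ : Vec q) : ℝ := D.LML β (Matrix.diagonal γ)

/-- ν = max_i (1/2) μ_min(Λ_i)^{-2} σ_max(Z_i)^4. -/
def nu (D : LMEData m p q) : ℝ :=
  ⨆ i : Fin m, (1 : ℝ) / 2 * ((minEig (D.lam i)) ^ 2)⁻¹ * (opNorm (D.Z i)) ^ 4

/-- η̄ = ν m. -/
def etabar (D : LMEData m p q) : ℝ := D.nu * m

/-- L_{η,μ}((β,γ),(β̃,γ̃)) = L(β,γ) + φ_μ(γ) + κ_η(β−β̃,γ−γ̃). -/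
def Lrelax (D : LMEData m p q) (η μ : ℝ) (x w : Vec p × Vec q) : EReal :=
  ((D.L x.1 x.2 + kappaFun η (x - w) : ℝ) : EReal) + phiBar μ x.2

/-- The optimal value function u_{η,μ} (with extended-real values). -/
def uval (D : LMEData m p q) (η μ : ℝ) (w : Vec p × Vec q) : EReal :=
  ⨅ x : Vec p × Vec q, D.Lrelax η μ x w

/-- The (real-valued) optimal value function u_{η,μ}. -/
def ufun (D : LMEData m p q) (η μ : ℝ) (w : Vec p × Vec q) : ℝ := (D.uval η μ w).toReal

/-- Partial gradient ∇_β L. -/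
def gradB (D : LMEData m p q) (β : Vec p) (γ : Vec q) : Vec p :=
  fun j => fderiv ℝ (fun b => D.L b γ) β (Pi.single j 1)

/-- Partial gradient ∇_γ L. -/
def gradG (D : LMEData m p q) (β : Vec p) (γ : Vec q) : Vec q :=
  fun j => fderiv ℝ (fun g => D.L β g) γ (Pi.single j 1)

/-- The map G_{η,μ}. -/
def Gmap (D : LMEData m p q) (η μ : ℝ) (x : Vec p × Vec q × Vec q) (w : Vec p × Vec q) :
    Vec p × Vec q × Vec q :=
  (D.gradB x.1 x.2.1 + η • (x.1 - w.1),
   D.gradG x.1 x.2.1 + η • (x.2.1 - w.2) - x.2.2,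
   fun j => x.2.2 j * x.2.1 j - μ)

/-- Second-derivative block ∇²_{ββ} L. -/
def hessBB (D : LMEData m p q) (β : Vec p) (γ : Vec q) : Matrix (Fin p) (Fin p) ℝ :=
  Matrix.of fun j k => fderiv ℝ (fun b => D.gradB b γ j) β (Pi.single k 1)

/-- Second-derivative block ∇²_{γγ} L. -/
def hessGG (D : LMEData m p q) (β : Vec p) (γ : Vec q) : Matrix (Fin q) (Fin q) ℝ :=
  Matrix.of fun j k => fderiv ℝ (fun g => D.gradG β g j) γ (Pi.single k 1)

/-- Second-derivative block ∇²_{γβ} L (the p×q cross block). -/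
def hessGB (D : LMEData m p q) (β : Vec p) (γ : Vec q) : Matrix (Fin p) (Fin q) ℝ :=
  Matrix.of fun j k => fderiv ℝ (fun g => D.gradB β g j) γ (Pi.single k 1)

/-- Second-derivative block ∇²_{βγ} L (the q×p cross block). -/
def hessBG (D : LMEData m p q) (β : Vec p) (γ : Vec q) : Matrix (Fin q) (Fin p) ℝ :=
  Matrix.of fun j k => fderiv ℝ (fun b => D.gradG b γ j) β (Pi.single k 1)

end LMEData

/-- f(r, M) = (1/2)(rᵀM⁻¹r + ln det M). -/
def fRM {n : ℕ} (r : Vec n) (M : Matrix (Fin n) (Fin n) ℝ) : ℝ :=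
  (1 : ℝ) / 2 * (r ⬝ᵥ (M⁻¹ *ᵥ r) + Real.log M.det)

/-! ### Auxiliary lemmas -/

lemma det_one_add_psd' {n : Type*} [Fintype n] [DecidableEq n] {C : Matrix n n ℝ}
    (hC : C.PosSemidef) : 1 ≤ (1 + C).det := by
  have h := hC.isHermitian
  set U : Matrix n n ℝ := (Matrix.IsHermitian.eigenvectorUnitary h : Matrix n n ℝ) with hU
  set Dg : Matrix n n ℝ := Matrix.diagonal (RCLike.ofReal ∘ h.eigenvalues) with hDg
  have hUU : U * star U = 1 :=
    (Matrix.mem_unitaryGroup_iff).mp (Matrix.IsHermitian.eigenvectorUnitary h).2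
  have hspec := h.spectral_theorem
  rw [Unitary.conjStarAlgAut_apply, ← hU, ← hDg] at hspec
  have key : 1 + C = U * (1 + Dg) * star U := by
    rw [Matrix.mul_add, Matrix.add_mul, Matrix.mul_one, hUU, ← hspec]
  rw [key, Matrix.det_mul, Matrix.det_mul]
  have : U.det * (1 + Dg).det * (star U).det = (U * star U).det * (1 + Dg).det := by
    rw [Matrix.det_mul]; ring
  rw [this, hUU, Matrix.det_one, one_mul]
  have h1 : (1 : Matrix n n ℝ) + Dg = Matrix.diagonal (fun i => 1 + h.eigenvalues i) := by
    rw [hDg, ← Matrix.diagonal_one, Matrix.diagonal_add]; rfl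
  rw [h1, Matrix.det_diagonal]
  calc (1:ℝ) = ∏ _i : n, (1:ℝ) := by simp
    _ ≤ ∏ i : n, (1 + h.eigenvalues i) :=
        Finset.prod_le_prod (fun i _ => zero_le_one)
          (fun i _ => by linarith [hC.eigenvalues_nonneg i])

lemma det_le_det_add_psd' {n : Type*} [Fintype n] [DecidableEq n]
    {A B : Matrix n n ℝ} (hA : A.PosDef) (hB : B.PosSemidef) : A.det ≤ (A + B).det := by
  open MatrixOrder in set S := CFC.sqrt A with hSdef
  have hS : S.PosSemidef := by open MatrixOrder in exact (CFC.sqrt_nonneg A).posSemidef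
  have hSS : S * S = A := by open MatrixOrder in exact CFC.sqrt_mul_sqrt_self A hA.posSemidef.nonneg
  have hdetA : 0 < A.det := hA.det_pos
  have hdS : S.det ≠ 0 := by
    intro h0
    rw [← hSS, Matrix.det_mul, h0, mul_zero] at hdetA
    exact lt_irrefl _ hdetA
  have hUnit : IsUnit S.det := isUnit_iff_ne_zero.mpr hdS
  have hSinv : S * S⁻¹ = 1 := Matrix.mul_nonsing_inv S hUnit
  have hSinv' : S⁻¹ * S = 1 := Matrix.nonsing_inv_mul S hUnit
  have hSinvH : (S⁻¹)ᴴ = S⁻¹ := by rw [Matrix.conjTranspose_nonsing_inv, hS.isHermitian.eq]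
  have hC : (S⁻¹ * B * S⁻¹).PosSemidef := by
    have := hB.mul_mul_conjTranspose_same S⁻¹
    rwa [hSinvH] at this
  have key : A + B = S * (1 + S⁻¹ * B * S⁻¹) * S := by
    rw [Matrix.mul_add, Matrix.mul_one, Matrix.add_mul, hSS]
    congr 1
    symm
    calc S * (S⁻¹ * B * S⁻¹) * S = (S * S⁻¹) * B * (S⁻¹ * S) := by
          simp only [Matrix.mul_assoc]
      _ = B := by rw [hSinv, hSinv', Matrix.one_mul, Matrix.mul_one]
  rw [key, Matrix.det_mul, Matrix.det_mul]
  have h1 : 1 ≤ (1 + S⁻¹ * B * S⁻¹).det := det_one_add_psd' hC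
  calc A.det = S.det * 1 * S.det := by rw [mul_one, ← Matrix.det_mul, hSS]
    _ ≤ S.det * (1 + S⁻¹ * B * S⁻¹).det * S.det := by
        have hSd0 : 0 ≤ S.det := by
          rw [hS.isHermitian.det_eq_prod_eigenvalues]
          exact Finset.prod_nonneg fun i _ => hS.eigenvalues_nonneg i
        exact mul_le_mul_of_nonneg_right (mul_le_mul_of_nonneg_left h1 hSd0) hSd0

lemma sqnorm2_nonneg' {p q : ℕ} (w : Vec p × Vec q) : 0 ≤ sqnorm2 w := by
  unfold sqnorm2; positivity

/-- Embedding of a pair of vectors into Euclidean space. -/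
def emb' {p q : ℕ} (w : Vec p × Vec q) : EuclideanSpace ℝ (Fin p ⊕ Fin q) :=
  WithLp.toLp 2 (fun s => Sum.elim w.1 w.2 s)

lemma emb'_sub {p q : ℕ} (a b : Vec p × Vec q) : emb' (a - b) = emb' a - emb' b := by
  ext s; cases s <;> rfl

lemma norm_emb' {p q : ℕ} (w : Vec p × Vec q) : ‖emb' w‖ = Real.sqrt (sqnorm2 w) := by
  rw [EuclideanSpace.norm_eq]
  congr 1
  rw [Fintype.sum_sum_type]
  simp [emb', sqnorm2, Real.norm_eq_abs, sq_abs]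

lemma abs_fst_le_sqrt {p q : ℕ} (w : Vec p × Vec q) (j : Fin p) :
    |w.1 j| ≤ Real.sqrt (sqnorm2 w) := by
  rw [← Real.sqrt_sq_eq_abs]
  apply Real.sqrt_le_sqrt
  unfold sqnorm2
  have h1 : (w.1 j)^2 ≤ ∑ k, (w.1 k)^2 :=
    Finset.single_le_sum (f := fun k => (w.1 k)^2) (fun k _ => sq_nonneg _) (Finset.mem_univ j)
  have h2 : (0:ℝ) ≤ ∑ k, (w.2 k)^2 := Finset.sum_nonneg fun k _ => sq_nonneg _
  linarith

lemma abs_snd_le_sqrt {p q : ℕ} (w : Vec p × Vec q) (j : Fin q) :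
    |w.2 j| ≤ Real.sqrt (sqnorm2 w) := by
  rw [← Real.sqrt_sq_eq_abs]
  apply Real.sqrt_le_sqrt
  unfold sqnorm2
  have h1 : (w.2 j)^2 ≤ ∑ k, (w.2 k)^2 :=
    Finset.single_le_sum (f := fun k => (w.2 k)^2) (fun k _ => sq_nonneg _) (Finset.mem_univ j)
  have h2 : (0:ℝ) ≤ ∑ k, (w.1 k)^2 := Finset.sum_nonneg fun k _ => sq_nonneg _
  linarith

lemma phiBar_cases' {q' : ℕ} {μ : ℝ} (hμ : 0 ≤ μ) (γ : Vec q') (hfin : phiBar μ γ ≠ ⊤) :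
    (∀ j, 0 ≤ γ j) ∧ ∃ v : ℝ, phiBar μ γ = (v : EReal) ∧ (q' : ℝ) * μ - ∑ j, γ j ≤ v := by
  rcases eq_or_lt_of_le hμ with h0 | hpos
  · subst h0
    unfold phiBar at hfin ⊢
    rw [if_pos rfl] at hfin ⊢
    by_cases hγ : ∀ j, 0 ≤ γ j
    · rw [if_pos hγ]
      refine ⟨hγ, 0, rfl, ?_⟩
      have : (0:ℝ) ≤ ∑ j, γ j := Finset.sum_nonneg fun j _ => hγ j
      simp only [mul_zero]
      linarith
    · rw [if_neg hγ] at hfin; exact absurd rfl hfin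
  · have hne : μ ≠ 0 := ne_of_gt hpos
    unfold phiBar at hfin ⊢
    rw [if_neg hne, if_pos hpos] at hfin ⊢
    by_cases hγ : ∀ j, 0 < γ j
    · rw [if_pos hγ]
      refine ⟨fun j => (hγ j).le, (-μ) * ∑ j, Real.log (γ j / μ), rfl, ?_⟩
      have hterm : ∀ j, μ - γ j ≤ (-μ) * Real.log (γ j / μ) := by
        intro j
        have hl := Real.log_le_sub_one_of_pos (div_pos (hγ j) hpos)
        have := mul_le_mul_of_nonneg_left hl hμ
        rw [mul_sub, mul_one, mul_div_cancel₀ _ hne] at this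
        linarith
      have hsum : ∑ j, (μ - γ j) ≤ ∑ j, (-μ) * Real.log (γ j / μ) :=
        Finset.sum_le_sum fun j _ => hterm j
      rw [Finset.sum_sub_distrib, Finset.sum_const, Finset.card_univ, Fintype.card_fin,
        ← Finset.mul_sum] at hsum
      simpa [nsmul_eq_mul] using hsum
    · rw [if_neg hγ] at hfin; exact absurd rfl hfin

lemma L_lower_bound' {m p q : ℕ} (D : LMEData m p q) (hlam : ∀ i, (D.lam i).PosDef)
    (β : Vec p) (γ : Vec q) (hγ : ∀ j, 0 ≤ γ j) :
    (∑ i, (1:ℝ)/2 * Real.log (D.lam i).det) ≤ D.L β γ := by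
  unfold LMEData.L LMEData.LML
  apply Finset.sum_le_sum
  intro i _
  set r := D.y i - D.X i *ᵥ β with hr
  have hΓ : (Matrix.diagonal γ).PosSemidef := Matrix.posSemidef_diagonal_iff.mpr hγ
  have hZ : (D.Z i * Matrix.diagonal γ * (D.Z i)ᵀ).PosSemidef := by
    have := hΓ.mul_mul_conjTranspose_same (D.Z i)
    rwa [Matrix.conjTranspose_eq_transpose_of_trivial] at this
  have hΩ : (D.Omega (Matrix.diagonal γ) i).PosDef := Matrix.PosDef.posSemidef_add hZ (hlam i)
  have hquad : 0 ≤ r ⬝ᵥ ((D.Omega (Matrix.diagonal γ) i)⁻¹ *ᵥ r) := by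
    have h2 := (hΩ.inv).posSemidef.dotProduct_mulVec_nonneg r
    simpa using h2
  have hdet : Real.log (D.lam i).det ≤ Real.log (D.Omega (Matrix.diagonal γ) i).det := by
    apply Real.log_le_log (hlam i).det_pos
    have h3 := det_le_det_add_psd' (hlam i) hZ
    rw [LMEData.Omega, add_comm]
    exact h3
  linarith

/-- Triangle inequality for `Real.sqrt ∘ sqnorm2`. -/
lemma sqrt_sqnorm2_tri {p q : ℕ} (a b : Vec p × Vec q) :
    Real.sqrt (sqnorm2 a) ≤ Real.sqrt (sqnorm2 (a - b)) + Real.sqrt (sqnorm2 b) := by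
  rw [← norm_emb' a, ← norm_emb' (a - b), ← norm_emb' b, emb'_sub]
  have := norm_add_le (emb' a - emb' b) (emb' b)
  simpa using this

/-- L_{η,μ} is level bounded in (β,γ) locally uniformly in (β̃,γ̃). -/
theorem Lrelax_level_bounded_locally_uniformly
    {m p q : ℕ} (hm : 0 < m) (hp : 0 < p) (hq : 0 < q)
    (D : LMEData m p q) (hn : ∀ i, 0 < D.n i) (hlam : ∀ i, (D.lam i).PosDef)
    (μ η : ℝ) (hμ : 0 ≤ μ) (hη : D.etabar < η)
    (wbar : Vec p × Vec q) (ρ : ℝ) :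
    ∃ ε : ℝ, 0 < ε ∧ ∃ B : Set (Vec p × Vec q), Bornology.IsBounded B ∧
      ∀ w : Vec p × Vec q, Real.sqrt (sqnorm2 (w - wbar)) ≤ ε →
        {x : Vec p × Vec q | D.Lrelax η μ x w ≤ (ρ : EReal)} ⊆ B := by
  have hnu : 0 ≤ D.nu := Real.iSup_nonneg fun i => by positivity
  have hη0 : 0 < η := by
    refine lt_of_le_of_lt ?_ hη
    unfold LMEData.etabar
    exact mul_nonneg hnu (Nat.cast_nonneg m)
  set CL : ℝ := ∑ i, (1:ℝ)/2 * Real.log (D.lam i).det with hCL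
  set c : ℝ := Real.sqrt (sqnorm2 wbar) + 1 with hc
  set K : ℝ := ρ - CL - q*μ + q*c with hK
  set R0 : ℝ := max 1 (2*(|K| + q)/η) with hR0
  have hR01 : (1:ℝ) ≤ R0 := le_max_left _ _
  refine ⟨1, one_pos, Metric.closedBall wbar (R0 + 1), Metric.isBounded_closedBall, ?_⟩
  intro w hw x hx
  simp only [Set.mem_setOf_eq] at hx
  unfold LMEData.Lrelax at hx
  have hfin : phiBar μ x.2 ≠ ⊤ := by
    intro htop
    rw [htop] at hx
    simp only [EReal.coe_add_top] at hx
    exact absurd (le_antisymm le_top (le_trans hx le_top)) (by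
      intro h
      exact (EReal.top_ne_coe (x := ρ)) (le_antisymm (h ▸ le_top) hx).symm)
  obtain ⟨hγnn, v, hv, hvb⟩ := phiBar_cases' hμ x.2 hfin
  rw [hv, ← EReal.coe_add] at hx
  have hx' : D.L x.1 x.2 + kappaFun η (x - w) + v ≤ ρ := EReal.coe_le_coe_iff.mp hx
  set s : ℝ := Real.sqrt (sqnorm2 (x - w)) with hs
  have hs0 : 0 ≤ s := Real.sqrt_nonneg _
  have hκ : kappaFun η (x - w) = η/2 * s^2 := by
    unfold kappaFun
    rw [hs, Real.sq_sqrt (sqnorm2_nonneg' _)]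
  have hLlb : CL ≤ D.L x.1 x.2 := L_lower_bound' D hlam x.1 x.2 hγnn
  have hwb : Real.sqrt (sqnorm2 (w - wbar)) ≤ 1 := hw
  have htri : Real.sqrt (sqnorm2 x) ≤ s + c := by
    calc Real.sqrt (sqnorm2 x)
        ≤ Real.sqrt (sqnorm2 (x - w)) + Real.sqrt (sqnorm2 w) := sqrt_sqnorm2_tri x w
      _ ≤ s + (Real.sqrt (sqnorm2 (w - wbar)) + Real.sqrt (sqnorm2 wbar)) := by
          rw [← hs]
          exact add_le_add_right (sqrt_sqnorm2_tri w wbar) s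
      _ ≤ s + c := by rw [hc]; linarith
  have hsum : ∑ j, x.2 j ≤ q * (s + c) := by
    have hterm : ∀ j, x.2 j ≤ s + c := fun j =>
      le_trans (le_abs_self _) (le_trans (abs_snd_le_sqrt x j) htri)
    calc ∑ j, x.2 j ≤ ∑ _j : Fin q, (s + c) := Finset.sum_le_sum fun j _ => hterm j
      _ = q * (s + c) := by
          rw [Finset.sum_const, Finset.card_univ, Fintype.card_fin, nsmul_eq_mul]
  have hineq : η/2 * s^2 ≤ K + q * s := by
    have hexp : (q:ℝ) * (s + c) = q*s + q*c := by ring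
    rw [hK]
    rw [hκ] at hx'
    rw [hexp] at hsum
    clear_value s CL c K R0
    linarith [hvb, hLlb, hsum]
  have hsR : s ≤ R0 := by
    by_cases h1 : s ≤ 1
    · exact le_trans h1 hR01
    · push_neg at h1
      have hKs : K + q*s ≤ (|K| + q) * s := by
        have h2 : K ≤ |K| := le_abs_self K
        have h3 : (0:ℝ) ≤ |K| := abs_nonneg K
        nlinarith
      have h4 : η/2 * s^2 ≤ (|K|+q)*s := le_trans hineq hKs
      have hspos : (0:ℝ) < s := lt_trans one_pos h1
      have h5 : η/2 * s ≤ |K| + q := by nlinarith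
      refine le_trans ?_ (le_max_right 1 (2*(|K| + q)/η))
      rw [le_div_iff₀ hη0]
      linarith
  have hxwbar : Real.sqrt (sqnorm2 (x - wbar)) ≤ R0 + 1 := by
    have h6 : x - wbar = (x - w) + (w - wbar) := by abel
    calc Real.sqrt (sqnorm2 (x - wbar))
        ≤ Real.sqrt (sqnorm2 ((x - wbar) - (w - wbar))) + Real.sqrt (sqnorm2 (w - wbar)) :=
          sqrt_sqnorm2_tri _ _
      _ ≤ s + 1 := by
          have h7 : (x - wbar) - (w - wbar) = x - w := by abel
          rw [h7, ← hs]
          exact add_le_add_right hwb s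
      _ ≤ R0 + 1 := by linarith
  have hr1 : (0:ℝ) ≤ R0 + 1 := by linarith
  rw [Metric.mem_closedBall, Prod.dist_eq]
  apply max_le
  · rw [dist_pi_le_iff hr1]
    intro j
    rw [Real.dist_eq]
    exact le_trans (abs_fst_le_sqrt (x - wbar) j) hxwbar
  · rw [dist_pi_le_iff hr1]
    intro j
    rw [Real.dist_eq]
    exact le_trans (abs_snd_le_sqrt (x - wbar) j) hxwbar
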